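/- Let (X,d) be a geodesic metric space with the following geodesic stability property: for every λ ≥ 1 and S > 0 there exists H(λ,S) > 0 such that every (λ,S)-quasi-geodesic γ: [a,b] → X has image within Hausdorff distance H(λ,S) of the image of every geodesic segment joining γ(a) to γ(b). Then X is Gromov hyperbolic; i.e., there exists δ ≥ 0 such that X is δ-thin-hyperbolic. -/

import Mathlib

/-- `γ` is a geodesic segment from `x` to `y`, parametrized by arclength on `[0, dist x y]`. -/
def IsGeodesicSegment {X : Type*} [MetricSpace X] (γ : ℝ → X) (x y : X) : Prop :=
  γ 0 = x ∧ γ (dist x y) = y ∧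
    ∀ s ∈ Set.Icc (0 : ℝ) (dist x y), ∀ t ∈ Set.Icc (0 : ℝ) (dist x y),
      dist (γ s) (γ t) = |s - t|

/-- A metric space is geodesic if any two points are joined by a geodesic segment. -/
def GeodesicSpace (X : Type*) [MetricSpace X] : Prop :=
  ∀ x y : X, ∃ γ : ℝ → X, IsGeodesicSegment γ x y

/-- `X` is `δ`-thin-hyperbolic: for every geodesic triangle, each point on any one of the
three sides lies within distance `δ` of the union of the other two sides. -/
def ThinTriangles (X : Type*) [MetricSpace X] (δ : ℝ) : Prop :=
  ∀ (a b c : X) (γab γbc γca : ℝ → X),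
    IsGeodesicSegment γab a b → IsGeodesicSegment γbc b c → IsGeodesicSegment γca c a →
    (∀ s ∈ Set.Icc (0 : ℝ) (dist a b),
      Metric.infDist (γab s) (γbc '' Set.Icc 0 (dist b c) ∪ γca '' Set.Icc 0 (dist c a)) ≤ δ) ∧
    (∀ s ∈ Set.Icc (0 : ℝ) (dist b c),
      Metric.infDist (γbc s) (γab '' Set.Icc 0 (dist a b) ∪ γca '' Set.Icc 0 (dist c a)) ≤ δ) ∧
    (∀ s ∈ Set.Icc (0 : ℝ) (dist c a),
      Metric.infDist (γca s) (γab '' Set.Icc 0 (dist a b) ∪ γbc '' Set.Icc 0 (dist b c)) ≤ δ)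

/-- `γ` restricted to `[a, b]` is a `(λ, S)`-quasi-geodesic:
`λ⁻¹|s−t| − S ≤ d(γ s, γ t) ≤ λ|s−t| + S` for all `s, t ∈ [a, b]`. -/
def IsQuasiGeodesicOn {X : Type*} [MetricSpace X] (lam S : ℝ) (γ : ℝ → X) (a b : ℝ) : Prop :=
  ∀ s ∈ Set.Icc a b, ∀ t ∈ Set.Icc a b,
    lam⁻¹ * |s - t| - S ≤ dist (γ s) (γ t) ∧ dist (γ s) (γ t) ≤ lam * |s - t| + S

open Metric Set

private lemma quasi_of_ordered {X : Type*} [MetricSpace X] {lam S : ℝ} {γ : ℝ → X} {p q : ℝ}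
    (h : ∀ s ∈ Set.Icc p q, ∀ t ∈ Set.Icc p q, s ≤ t →
      lam⁻¹ * (t - s) - S ≤ dist (γ s) (γ t) ∧ dist (γ s) (γ t) ≤ lam * (t - s) + S) :
    IsQuasiGeodesicOn lam S γ p q := by
  intro s hs t ht
  rcases le_total s t with hst | hts
  · have h2 := h s hs t ht hst
    rw [abs_of_nonpos (by linarith), neg_sub]
    exact h2
  · have h2 := h t ht s hs hts
    rw [dist_comm] at h2
    rw [abs_of_nonneg (by linarith)]
    exact h2

set_option maxHeartbeats 2000000 in
/-- The main covering lemma: with two stability constants in hand, every point of the side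
`γab` of a geodesic triangle is within `H2 + H1 + 102` of the union of the two other sides. -/
private lemma cover {X : Type*} [MetricSpace X] (hgeo : GeodesicSpace X)
    {H1 H2 : ℝ} (hH1pos : 0 < H1)
    (hH1 : ∀ (p q : ℝ) (γ : ℝ → X), IsQuasiGeodesicOn 100 100 γ p q →
      ∀ g : ℝ → X, IsGeodesicSegment g (γ p) (γ q) →
        Metric.hausdorffDist (γ '' Set.Icc p q) (g '' Set.Icc 0 (dist (γ p) (γ q))) ≤ H1)
    (hH2 : ∀ (p q : ℝ) (γ : ℝ → X), IsQuasiGeodesicOn 100 (100 * (H1 + 101) + 100) γ p q →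
      ∀ g : ℝ → X, IsGeodesicSegment g (γ p) (γ q) →
        Metric.hausdorffDist (γ '' Set.Icc p q) (g '' Set.Icc 0 (dist (γ p) (γ q))) ≤ H2)
    (a b c : X) (γab γbc γca : ℝ → X)
    (hab : IsGeodesicSegment γab a b) (hbc : IsGeodesicSegment γbc b c)
    (hca : IsGeodesicSegment γca c a) :
    ∀ s ∈ Set.Icc (0 : ℝ) (dist a b),
      Metric.infDist (γab s) (γbc '' Set.Icc 0 (dist b c) ∪ γca '' Set.Icc 0 (dist c a))
        ≤ H2 + H1 + 102 := by
  classical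
  set D := dist a b with hD
  set L1 := dist c a with hL1
  set L2 := dist b c with hL2
  have hL1n : 0 ≤ L1 := dist_nonneg
  have hL2n : 0 ≤ L2 := dist_nonneg
  -- the side from c to b, reversed parametrization of γbc
  set β : ℝ → X := fun τ => γbc (L2 - τ) with hβ
  have hβ0 : β 0 = c := by simp only [hβ, sub_zero]; exact hbc.2.1
  have hβL : β L2 = b := by simp only [hβ, sub_self]; exact hbc.1
  have hβiso : ∀ τ ∈ Set.Icc (0:ℝ) L2, ∀ τ' ∈ Set.Icc (0:ℝ) L2,
      dist (β τ) (β τ') = |τ - τ'| := by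
    intro τ hτ τ' hτ'
    have h1 : L2 - τ ∈ Set.Icc (0:ℝ) L2 := ⟨by linarith [hτ.2], by linarith [hτ.1]⟩
    have h2 : L2 - τ' ∈ Set.Icc (0:ℝ) L2 := ⟨by linarith [hτ'.2], by linarith [hτ'.1]⟩
    have := hbc.2.2 (L2 - τ) h1 (L2 - τ') h2
    simp only [hβ]
    rw [this]
    rw [show L2 - τ - (L2 - τ') = -(τ - τ') by ring, abs_neg]
  have hβc : ∀ τ ∈ Set.Icc (0:ℝ) L2, dist c (β τ) = τ := by
    intro τ hτ
    rw [← hβ0, hβiso 0 ⟨le_refl _, hL2n⟩ τ hτ, abs_of_nonpos (by linarith [hτ.1]), neg_sub,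
      sub_zero]
  have hαc : ∀ w ∈ Set.Icc (0:ℝ) L1, dist c (γca w) = w := by
    intro w hw
    rw [← hca.1]
    rw [hca.2.2 0 ⟨le_refl _, hL1n⟩ w hw, abs_of_nonpos (by linarith [hw.1]), neg_sub, sub_zero]
  set Aim : Set X := γca '' Set.Icc 0 L1 with hAim
  have hAne : Aim.Nonempty := ⟨c, 0, ⟨le_refl _, hL1n⟩, hca.1⟩
  set φ : ℝ → ℝ := fun τ => infDist (β τ) Aim with hφ
  have hφnn : ∀ τ, 0 ≤ φ τ := fun τ => infDist_nonneg
  have hφlip : ∀ τ ∈ Set.Icc (0:ℝ) L2, ∀ τ' ∈ Set.Icc (0:ℝ) L2, φ τ ≤ φ τ' + |τ - τ'| := by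
    intro τ hτ τ' hτ'
    have := infDist_le_infDist_add_dist (x := β τ) (y := β τ') (s := Aim)
    rwa [dist_comm, hβiso τ' hτ' τ hτ, abs_sub_comm] at this
  have hφ0 : φ 0 = 0 := by
    simp only [hφ]
    rw [hβ0]
    exact infDist_zero_of_mem ⟨0, ⟨le_refl _, hL1n⟩, hca.1⟩
  set Θ : ℝ := H1 + 101 with hΘ
  have hΘ1 : 101 < Θ + 1 := by linarith
  have hΘpos : 0 < Θ := by linarith
  -- the last time β is Θ-close to the image of γca
  set Sset : Set ℝ := {τ | τ ∈ Set.Icc (0:ℝ) L2 ∧ φ τ ≤ Θ} with hSset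
  have hS0 : (0:ℝ) ∈ Sset := ⟨⟨le_refl _, hL2n⟩, by rw [hφ0]; linarith⟩
  have hSne : Sset.Nonempty := ⟨0, hS0⟩
  have hSbdd : BddAbove Sset := ⟨L2, fun x hx => hx.1.2⟩
  set τB : ℝ := sSup Sset with hτB
  have hτB0 : 0 ≤ τB := le_csSup hSbdd hS0
  have hτBL : τB ≤ L2 := csSup_le hSne (fun x hx => hx.1.2)
  have hτBmem : τB ∈ Set.Icc (0:ℝ) L2 := ⟨hτB0, hτBL⟩
  have habove : ∀ τ ∈ Set.Icc (0:ℝ) L2, τB < τ → Θ < φ τ := by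
    intro τ hτ hlt
    by_contra hc
    push_neg at hc
    exact absurd (le_csSup hSbdd ⟨hτ, hc⟩) (not_le.2 hlt)
  have hτBφ : φ τB ≤ Θ := by
    by_contra hc
    push_neg at hc
    set ε := (φ τB - Θ) / 2 with hε
    have hεpos : 0 < ε := by simp only [hε]; linarith
    obtain ⟨x, hxS, hxgt⟩ := (lt_csSup_iff hSbdd hSne).1 (show τB - ε < τB by linarith)
    have hxle : x ≤ τB := le_csSup hSbdd hxS
    have := hφlip τB hτBmem x hxS.1
    rw [abs_of_nonneg (by linarith)] at this
    have := hxS.2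
    linarith
  -- THE DIVERGENCE LEMMA
  have DIV : ∀ u ∈ Set.Icc (0:ℝ) L2, τB < u → (u - τB) - 2*Θ ≤ 2 * φ u := by
    by_contra hc
    push_neg at hc
    obtain ⟨u1, hu1, hu1B, hu1f⟩ := hc
    set F : Set ℝ := {u | u ∈ Set.Icc (0:ℝ) L2 ∧ τB < u ∧ 2 * φ u < (u - τB) - 2*Θ} with hF
    have hFne : F.Nonempty := ⟨u1, hu1, hu1B, hu1f⟩
    have hFlow : ∀ u ∈ F, τB + 4*Θ < u := by
      intro u hu
      have h1 := habove u hu.1 hu.2.1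
      have := hu.2.2
      linarith
    have hFbdd : BddBelow F := ⟨τB, fun u hu => le_of_lt (lt_of_le_of_lt (by linarith) (hFlow u hu))⟩
    set u0 : ℝ := sInf F with hu0
    have hu0low : τB + 4*Θ ≤ u0 := le_csInf hFne (fun u hu => le_of_lt (hFlow u hu))
    have hu0le : ∀ u ∈ F, u0 ≤ u := fun u hu => csInf_le hFbdd hu
    have hu0L2 : u0 ≤ L2 := le_trans (hu0le u1 ⟨hu1, hu1B, hu1f⟩) hu1.2
    have hu0mem : u0 ∈ Set.Icc (0:ℝ) L2 := ⟨by linarith, hu0L2⟩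
    have hu0B : τB < u0 := by linarith
    -- closure property at the infimum
    have hu0cl : 2 * φ u0 ≤ (u0 - τB) - 2*Θ := by
      by_contra hcc
      push_neg at hcc
      set ε := (2 * φ u0 - ((u0 - τB) - 2*Θ)) / 6 with hε
      have hεpos : 0 < ε := by simp only [hε]; linarith
      obtain ⟨u, huF, hult⟩ := (csInf_lt_iff hFbdd hFne).1 (show u0 < u0 + ε by linarith)
      have huge : u0 ≤ u := hu0le u huF
      have hlip := hφlip u0 hu0mem u huF.1
      rw [abs_of_nonpos (by linarith)] at hlip
      have := huF.2.2
      linarith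
    -- inductive property below the infimum
    have hind : ∀ v ∈ Set.Icc (0:ℝ) L2, τB < v → v < u0 → (v - τB) - 2*Θ ≤ 2 * φ v := by
      intro v hv hvB hvu
      by_contra hcc
      push_neg at hcc
      exact absurd (hu0le v ⟨hv, hvB, hcc⟩) (not_le.2 hvu)
    -- a nearly-optimal witness on the other side
    have hwit : infDist (β u0) Aim < φ u0 + 1 := by simp only [hφ]; linarith [hφnn u0]
    obtain ⟨x0, hx0A, hx0d⟩ := (infDist_lt_iff hAne).1 hwit
    obtain ⟨w, hw, rfl⟩ := hx0A
    set F0 : ℝ := dist (β u0) (γca w) with hF0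
    have hF0φ : φ u0 ≤ F0 := infDist_le_dist_of_mem ⟨w, hw, rfl⟩
    have hF0lt : F0 < φ u0 + 1 := hx0d
    have hF0pos : 0 < F0 := by
      have := habove u0 hu0mem hu0B
      linarith
    obtain ⟨Γ, hΓ⟩ := hgeo (β u0) (γca w)
    set R : ℝ → X := fun t => if t ≤ u0 then β t else Γ (t - u0) with hR
    obtain ⟨hΓ0, hΓe, hΓiso⟩ := hΓ
    rw [← hF0] at hΓe hΓiso
    have hinv : ((100:ℝ))⁻¹ = 1/100 := by norm_num
    have hRq : IsQuasiGeodesicOn 100 100 R 0 (u0 + F0) := by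
      apply quasi_of_ordered
      intro s hs t ht hst
      by_cases ht2 : t ≤ u0
      · -- both on the β-leg
        have hs2 : s ≤ u0 := le_trans hst ht2
        have hRs : R s = β s := by simp only [hR]; rw [if_pos hs2]
        have hRt : R t = β t := by simp only [hR]; rw [if_pos ht2]
        have hd : dist (R s) (R t) = t - s := by
          rw [hRs, hRt, hβiso s ⟨hs.1, le_trans hs2 hu0L2⟩ t ⟨ht.1, le_trans ht2 hu0L2⟩,
            abs_of_nonpos (by linarith), neg_sub]
        rw [hd, hinv]
        constructor <;> linarith
      · by_cases hs2 : s ≤ u0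
        · -- the crossing case
          have htpos : u0 < t := not_le.1 ht2
          have hRs : R s = β s := by simp only [hR]; rw [if_pos hs2]
          have hRt : R t = Γ (t - u0) := by simp only [hR]; rw [if_neg ht2]
          have hsL2 : s ∈ Set.Icc (0:ℝ) L2 := ⟨hs.1, le_trans hs2 hu0L2⟩
          have hℓmem : t - u0 ∈ Set.Icc (0:ℝ) F0 := ⟨by linarith, by linarith [ht.2]⟩
          have f1 : dist (β u0) (Γ (t - u0)) = t - u0 := by
            rw [← hΓ0, hΓiso 0 ⟨le_refl _, hF0pos.le⟩ (t - u0) hℓmem, zero_sub, abs_neg,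
              abs_of_nonneg (by linarith)]
          have f2 : dist (Γ (t - u0)) (γca w) = F0 - (t - u0) := by
            rw [← hΓe, hΓiso (t - u0) hℓmem F0 ⟨hF0pos.le, le_refl _⟩,
              abs_of_nonpos (by linarith [ht.2]), neg_sub]
          have f3 : dist (β s) (β u0) = u0 - s := by
            rw [hβiso s hsL2 u0 hu0mem, abs_of_nonpos (by linarith), neg_sub]
          have f6 : u0 - F0 ≤ w := by
            have h1 : |dist (γca w) c - dist (β u0) c| ≤ dist (γca w) (β u0) :=
              abs_dist_sub_le _ _ _
            rw [dist_comm (γca w) c, hαc w hw, dist_comm (β u0) c, hβc u0 hu0mem,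
              dist_comm (γca w) (β u0), ← hF0] at h1
            have := abs_le.1 h1
            linarith [this.1]
          set d : ℝ := dist (β s) (Γ (t - u0)) with hd
          have dnn : 0 ≤ d := dist_nonneg
          have upper : d ≤ (u0 - s) + (t - u0) := by
            calc d ≤ dist (β s) (β u0) + dist (β u0) (Γ (t - u0)) := dist_triangle _ _ _
              _ = (u0 - s) + (t - u0) := by rw [f3, f1]
          have low1 : t - u0 ≤ (u0 - s) + d := by
            calc t - u0 = dist (β u0) (Γ (t - u0)) := f1.symm
              _ ≤ dist (β u0) (β s) + d := dist_triangle _ _ _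
              _ = (u0 - s) + d := by rw [dist_comm, f3]
          have low2 : u0 - s ≤ (t - u0) + d := by
            calc u0 - s = dist (β s) (β u0) := f3.symm
              _ ≤ d + dist (Γ (t - u0)) (β u0) := dist_triangle _ _ _
              _ = (t - u0) + d := by rw [dist_comm (Γ (t - u0)) (β u0), f1]; ring
          have key : t - s ≤ 12 * d + 12 := by
            by_cases hc1 : 2 * (u0 - s) ≤ t - u0
            · -- the Γ part dominates
              linarith
            · push_neg at hc1
              have g2 : dist (β s) (γca w) ≤ d + (F0 - (t - u0)) := by
                calc dist (β s) (γca w) ≤ d + dist (Γ (t - u0)) (γca w) := dist_triangle _ _ _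
                  _ = d + (F0 - (t - u0)) := by rw [f2]
              by_cases hc2 : 2 * F0 ≤ u0 - s
              · -- universal budget
                have g3 : w - s ≤ dist (β s) (γca w) := by
                  have h1 : |dist (γca w) c - dist (β s) c| ≤ dist (γca w) (β s) :=
                    abs_dist_sub_le _ _ _
                  rw [dist_comm (γca w) c, hαc w hw, dist_comm (β s) c, hβc s hsL2,
                    dist_comm (γca w) (β s)] at h1
                  have := abs_le.1 h1
                  linarith [this.1]
                linarith
              · -- inductive budget
                push_neg at hc2
                have hsu : s < u0 := by linarith
                have hsτB : τB < s := by linarith [hu0cl, hF0lt, hF0φ]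
                have hindS : (s - τB) - 2*Θ ≤ 2 * φ s :=
                  hind s hsL2 hsτB hsu
                have g5 : φ s ≤ dist (β s) (γca w) := by
                  simp only [hφ]
                  exact infDist_le_dist_of_mem ⟨w, hw, rfl⟩
                have hF0small : 2 * F0 < (u0 - τB) - 2*Θ + 2 := by
                  linarith [hu0cl, hF0lt]
                linarith
          rw [hRs, hRt, ← hd, hinv]
          constructor <;> linarith
        · -- both on the Γ-leg
          push_neg at hs2
          have hRs : R s = Γ (s - u0) := by simp only [hR]; rw [if_neg (not_le.2 hs2)]
          have hRt : R t = Γ (t - u0) := by simp only [hR]; rw [if_neg (by linarith : ¬ t ≤ u0)]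
          have hd : dist (R s) (R t) = t - s := by
            rw [hRs, hRt,
              hΓiso (s - u0) ⟨by linarith, by linarith [hs.2]⟩
                (t - u0) ⟨by linarith, by linarith [ht.2]⟩]
            rw [show s - u0 - (t - u0) = -(t - s) by ring, abs_neg,
              abs_of_nonneg (by linarith)]
          rw [hd, hinv]
          constructor <;> linarith
    -- apply stability against the subsegment of γca itself
    have hR0 : R 0 = c := by
      simp only [hR]
      rw [if_pos (by linarith : (0:ℝ) ≤ u0)]
      exact hβ0
    have hRend : R (u0 + F0) = γca w := by
      simp only [hR]
      rw [if_neg (by linarith : ¬ u0 + F0 ≤ u0), show u0 + F0 - u0 = F0 by ring]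
      exact hΓe
    have hdist0 : dist (R 0) (R (u0 + F0)) = w := by
      rw [hR0, hRend]
      exact hαc w hw
    have hgeoseg : IsGeodesicSegment γca (R 0) (R (u0 + F0)) := by
      refine ⟨by rw [hR0]; exact hca.1, by rw [hdist0, hRend], ?_⟩
      rw [hdist0]
      intro s hs t ht
      exact hca.2.2 s ⟨hs.1, le_trans hs.2 hw.2⟩ t ⟨ht.1, le_trans ht.2 hw.2⟩
    have hstab1 := hH1 0 (u0 + F0) R hRq γca hgeoseg
    -- extract the contradiction at v = u0 - 1
    set v : ℝ := u0 - 1 with hv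
    have hvmem : v ∈ Set.Icc (0:ℝ) (u0 + F0) := ⟨by linarith, by linarith⟩
    have hRv : R v = β v := by
      simp only [hR]
      rw [if_pos (by linarith : v ≤ u0)]
    have hRimne : (R '' Set.Icc 0 (u0 + F0)).Nonempty :=
      ⟨R 0, 0, ⟨le_refl _, by linarith⟩, rfl⟩
    have hgimne : (γca '' Set.Icc 0 (dist (R 0) (R (u0 + F0)))).Nonempty :=
      ⟨γca 0, 0, ⟨le_refl _, by rw [hdist0]; exact hw.1⟩, rfl⟩
    have hRim_b : R '' Set.Icc 0 (u0 + F0) ⊆ Metric.closedBall c (u0 + F0) := by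
      rintro z ⟨t, ht, rfl⟩
      simp only [Metric.mem_closedBall, hR]
      split_ifs with h
      · rw [dist_comm, hβc t ⟨ht.1, le_trans h hu0L2⟩]
        linarith [ht.2, hF0pos]
      · push_neg at h
        calc dist (Γ (t - u0)) c ≤ dist (Γ (t - u0)) (Γ 0) + dist (Γ 0) c := dist_triangle _ _ _
          _ = (t - u0) + u0 := by
              rw [hΓiso (t - u0) ⟨by linarith, by linarith [ht.2]⟩ 0 ⟨le_refl _, le_of_lt hF0pos⟩,
                hΓ0, dist_comm, hβc u0 hu0mem, abs_of_nonneg (by linarith), sub_zero]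
          _ ≤ u0 + F0 := by linarith [ht.2]
    have hRbd : Bornology.IsBounded (R '' Set.Icc 0 (u0 + F0)) :=
      Metric.isBounded_closedBall.subset hRim_b
    have hgbd : Bornology.IsBounded (γca '' Set.Icc 0 (dist (R 0) (R (u0 + F0)))) := by
      apply (Metric.isBounded_closedBall (x := c) (r := L1)).subset
      rintro z ⟨t, ht, rfl⟩
      have htL1 : t ∈ Set.Icc (0:ℝ) L1 :=
        ⟨ht.1, le_trans ht.2 (by rw [hdist0]; exact hw.2)⟩
      simp only [Metric.mem_closedBall]
      rw [dist_comm, hαc t htL1]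
      exact htL1.2
    have hfin := Metric.hausdorffEdist_ne_top_of_nonempty_of_bounded hRimne hgimne hRbd hgbd
    have hmem : R v ∈ R '' Set.Icc 0 (u0 + F0) := ⟨v, hvmem, rfl⟩
    have hext : infDist (R v) (γca '' Set.Icc 0 (dist (R 0) (R (u0 + F0)))) ≤ H1 :=
      le_trans (Metric.infDist_le_hausdorffDist_of_mem hmem hfin) hstab1
    have hsub : γca '' Set.Icc 0 (dist (R 0) (R (u0 + F0))) ⊆ Aim := by
      rw [hdist0]
      exact Set.image_mono (Set.Icc_subset_Icc_right hw.2)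
    have hφv2 : φ v ≤ H1 := by
      have h1 : infDist (β v) Aim
          ≤ infDist (β v) (γca '' Set.Icc 0 (dist (R 0) (R (u0 + F0)))) :=
        infDist_le_infDist_of_subset hsub hgimne
      rw [hRv] at hext
      simp only [hφ]
      exact le_trans h1 hext
    have hvind := hind v ⟨by linarith, by linarith⟩ (by linarith) (by linarith)
    linarith [hvind, hφv2, hu0low]
  -- THE GRAND CHAIN
  have hinv : ((100:ℝ))⁻¹ = 1/100 := by norm_num
  have hwitB : infDist (β τB) Aim < Θ + 1 := by
    have : φ τB ≤ Θ := hτBφ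
    simp only [hφ] at this
    linarith
  obtain ⟨x0, hx0A, hx0d⟩ := (infDist_lt_iff hAne).1 hwitB
  obtain ⟨τt, hτt, rfl⟩ := hx0A
  set g0 : ℝ := dist (γca τt) (β τB) with hg0
  have hg0Θ : g0 < Θ + 1 := by rw [hg0, dist_comm]; exact hx0d
  have hg0nn : 0 ≤ g0 := dist_nonneg
  have hττ : |τt - τB| ≤ g0 := by
    have h1 : |dist (γca τt) c - dist (β τB) c| ≤ dist (γca τt) (β τB) := abs_dist_sub_le _ _ _
    rwa [dist_comm (γca τt) c, hαc τt hτt, dist_comm (β τB) c, hβc τB hτBmem, ← hg0] at h1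
  obtain ⟨Γ2, hΓ2⟩ := hgeo (γca τt) (β τB)
  obtain ⟨hΓ20, hΓ2e, hΓ2iso⟩ := hΓ2
  rw [← hg0] at hΓ2e hΓ2iso
  set ℓ1 : ℝ := L1 - τt with hℓ1
  have hℓ1nn : 0 ≤ ℓ1 := by simp only [hℓ1]; linarith [hτt.2]
  have hℓ1L1 : ℓ1 ≤ L1 := by simp only [hℓ1]; linarith [hτt.1]
  set T : ℝ := ℓ1 + g0 + (L2 - τB) with hT
  have hTnn : 0 ≤ T := by simp only [hT]; linarith
  set C : ℝ → X := fun t => if t ≤ ℓ1 then γca (L1 - t)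
    else if t ≤ ℓ1 + g0 then Γ2 (t - ℓ1) else β (τB + (t - ℓ1 - g0)) with hC
  have hC0 : C 0 = a := by
    simp only [hC]
    rw [if_pos hℓ1nn, sub_zero]
    exact hca.2.1
  have hCT : C T = b := by
    by_cases h1 : T ≤ ℓ1
    · have hg00 : g0 = 0 := by linarith [show T = ℓ1 + g0 + (L2 - τB) from hT, hτBL]
      have hτBL2 : τB = L2 := by
        have : g0 + (L2 - τB) ≤ 0 := by linarith [show T = ℓ1 + g0 + (L2 - τB) from hT]
        linarith [hτBL]
      have hTeq : T = ℓ1 := by rw [hT, hg00, hτBL2]; ring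
      simp only [hC]
      rw [if_pos h1, hTeq, show L1 - ℓ1 = τt by rw [hℓ1]; ring]
      have heq : γca τt = β τB := eq_of_dist_eq_zero (by rw [← hg0]; exact hg00)
      rw [heq, hτBL2, hβL]
    · push_neg at h1
      by_cases h2 : T ≤ ℓ1 + g0
      · have hτBL2 : τB = L2 := by
          have : L2 - τB ≤ 0 := by linarith [show T = ℓ1 + g0 + (L2 - τB) from hT]
          linarith [hτBL]
        have hTeq : T = ℓ1 + g0 := by rw [hT, hτBL2]; ring
        simp only [hC]
        rw [if_neg (not_le.2 h1), if_pos h2, hTeq, show ℓ1 + g0 - ℓ1 = g0 by ring, hΓ2e,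
          hτBL2, hβL]
      · push_neg at h2
        simp only [hC]
        rw [if_neg (not_le.2 h1), if_neg (not_le.2 h2),
          show τB + (T - ℓ1 - g0) = L2 by rw [hT]; ring, hβL]
  -- the grand chain is a quasi-geodesic
  have hCq : IsQuasiGeodesicOn 100 (100 * Θ + 100) C 0 T := by
    apply quasi_of_ordered
    intro s hs t ht hst
    have hsT := hs.2
    have htT := ht.2
    have hs0 := hs.1
    by_cases ht1 : t ≤ ℓ1
    · -- (1,1)
      have hs1 : s ≤ ℓ1 := le_trans hst ht1
      have hCs : C s = γca (L1 - s) := by simp only [hC]; rw [if_pos hs1]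
      have hCt : C t = γca (L1 - t) := by simp only [hC]; rw [if_pos ht1]
      have hd : dist (C s) (C t) = t - s := by
        rw [hCs, hCt, hca.2.2 (L1 - s) ⟨by linarith [hτt.1], by linarith⟩
          (L1 - t) ⟨by linarith [hτt.1], by linarith⟩,
          show L1 - s - (L1 - t) = t - s by ring, abs_of_nonneg (by linarith)]
      rw [hd, hinv]
      constructor <;> linarith
    · push_neg at ht1
      by_cases hs1 : s ≤ ℓ1
      · by_cases ht2 : t ≤ ℓ1 + g0
        · -- (1,2)
          have hCs : C s = γca (L1 - s) := by simp only [hC]; rw [if_pos hs1]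
          have hCt : C t = Γ2 (t - ℓ1) := by
            simp only [hC]; rw [if_neg (not_le.2 ht1), if_pos ht2]
          have hbr : dist (γca τt) (Γ2 (t - ℓ1)) = t - ℓ1 := by
            rw [← hΓ20, hΓ2iso 0 ⟨le_refl _, hg0nn⟩ (t - ℓ1) ⟨by linarith, by linarith⟩,
              zero_sub, abs_neg, abs_of_nonneg (by linarith)]
          have hleg : dist (γca (L1 - s)) (γca τt) = ℓ1 - s := by
            rw [hca.2.2 (L1 - s) ⟨by linarith [hτt.1], by linarith⟩ τt hτt,
              show L1 - s - τt = ℓ1 - s by rw [hℓ1]; ring, abs_of_nonneg (by linarith)]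
          have hub : dist (C s) (C t) ≤ t - s := by
            rw [hCs, hCt]
            calc dist (γca (L1 - s)) (Γ2 (t - ℓ1))
                ≤ dist (γca (L1 - s)) (γca τt) + dist (γca τt) (Γ2 (t - ℓ1)) :=
                  dist_triangle _ _ _
              _ = (ℓ1 - s) + (t - ℓ1) := by rw [hleg, hbr]
              _ = t - s := by ring
          have hlb : (ℓ1 - s) - (t - ℓ1) ≤ dist (C s) (C t) := by
            rw [hCs, hCt]
            have := dist_triangle (γca (L1 - s)) (Γ2 (t - ℓ1)) (γca τt)
            rw [dist_comm (Γ2 (t - ℓ1)) (γca τt), hbr] at this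
            linarith [hleg ▸ this]
          rw [hinv]
          constructor
          · have : t - ℓ1 ≤ g0 := by linarith
            linarith [dist_nonneg (x := C s) (y := C t)]
          · linarith [dist_nonneg (x := C s) (y := C t)]
        · -- (1,3) : the main case
          push_neg at ht2
          set r : ℝ := t - ℓ1 - g0 with hr
          have hrpos : 0 < r := by simp only [hr]; linarith
          have hrle : r ≤ L2 - τB := by simp only [hr]; simp only [hT] at htT; linarith
          have hCs : C s = γca (L1 - s) := by simp only [hC]; rw [if_pos hs1]
          have hCt : C t = β (τB + r) := by
            simp only [hC]; rw [if_neg (not_le.2 ht1), if_neg (not_le.2 ht2)]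
          have hτrmem : τB + r ∈ Set.Icc (0:ℝ) L2 := ⟨by linarith, by linarith⟩
          have hτzmem : L1 - s ∈ Set.Icc (0:ℝ) L1 := ⟨by linarith [hτt.1], by linarith⟩
          set d : ℝ := dist (γca (L1 - s)) (β (τB + r)) with hd
          have dnn : (0:ℝ) ≤ d := dist_nonneg
          have hA : |(L1 - s) - (τB + r)| ≤ d := by
            have h1 : |dist (γca (L1 - s)) c - dist (β (τB + r)) c|
                ≤ dist (γca (L1 - s)) (β (τB + r)) := abs_dist_sub_le _ _ _
            rwa [dist_comm (γca (L1 - s)) c, hαc (L1 - s) hτzmem,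
              dist_comm (β (τB + r)) c, hβc (τB + r) hτrmem, ← hd] at h1
          have hB : r - 2*Θ ≤ 2 * d := by
            have hdiv := DIV (τB + r) hτrmem (by linarith)
            have hφd : φ (τB + r) ≤ d := by
              simp only [hφ]
              rw [hd, dist_comm]
              exact infDist_le_dist_of_mem ⟨L1 - s, hτzmem, rfl⟩
            linarith
          have hβr : dist (β τB) (β (τB + r)) = r := by
            rw [hβiso τB hτBmem (τB + r) hτrmem, show τB - (τB + r) = -r by ring, abs_neg,
              abs_of_nonneg (by linarith)]
          have hleg : dist (γca (L1 - s)) (γca τt) = ℓ1 - s := by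
            rw [hca.2.2 (L1 - s) hτzmem τt hτt,
              show L1 - s - τt = ℓ1 - s by rw [hℓ1]; ring, abs_of_nonneg (by linarith)]
          have hub : d ≤ t - s := by
            rw [hd]
            calc dist (γca (L1 - s)) (β (τB + r))
                ≤ dist (γca (L1 - s)) (γca τt) + dist (γca τt) (β τB)
                    + dist (β τB) (β (τB + r)) := dist_triangle4 _ _ _ _
              _ = (ℓ1 - s) + g0 + r := by rw [hleg, ← hg0, hβr]
              _ = t - s := by rw [hr]; ring
          have habs := abs_le.1 hA
          have habs2 := abs_le.1 hττ
          have hkey : t - s ≤ 5 * d + 6 * Θ + 2 := by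
            have e1 : (L1 - s) - (τB + r) ≤ d := habs.2
            have e2 : τB - τt ≤ g0 := by linarith [habs2.1]
            have e3 : r ≤ 2*d + 2*Θ := by linarith [hB]
            have e4 : ℓ1 = L1 - τt := hℓ1
            have e5 : r = t - ℓ1 - g0 := hr
            linarith [hg0Θ]
          rw [hCs, hCt, ← hd, hinv]
          constructor
          · linarith
          · linarith
      · -- s in bridge or β-leg
        push_neg at hs1
        by_cases ht2 : t ≤ ℓ1 + g0
        · -- (2,2)
          have hs2 : s ≤ ℓ1 + g0 := le_trans hst ht2
          have hCs : C s = Γ2 (s - ℓ1) := by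
            simp only [hC]; rw [if_neg (not_le.2 hs1), if_pos hs2]
          have hCt : C t = Γ2 (t - ℓ1) := by
            simp only [hC]; rw [if_neg (not_le.2 ht1), if_pos ht2]
          have hd : dist (C s) (C t) = t - s := by
            rw [hCs, hCt, hΓ2iso (s - ℓ1) ⟨by linarith, by linarith⟩
              (t - ℓ1) ⟨by linarith, by linarith⟩,
              show s - ℓ1 - (t - ℓ1) = -(t - s) by ring, abs_neg, abs_of_nonneg (by linarith)]
          rw [hd, hinv]
          constructor <;> linarith
        · push_neg at ht2
          set r : ℝ := t - ℓ1 - g0 with hr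
          have hrpos : 0 < r := by simp only [hr]; linarith
          have hrle : r ≤ L2 - τB := by simp only [hr]; simp only [hT] at htT; linarith
          have hτrmem : τB + r ∈ Set.Icc (0:ℝ) L2 := ⟨by linarith, by linarith⟩
          have hβr : dist (β τB) (β (τB + r)) = r := by
            rw [hβiso τB hτBmem (τB + r) hτrmem, show τB - (τB + r) = -r by ring, abs_neg,
              abs_of_nonneg (by linarith)]
          have hCt : C t = β (τB + r) := by
            simp only [hC]; rw [if_neg (not_le.2 ht1), if_neg (not_le.2 ht2)]
          by_cases hs2 : s ≤ ℓ1 + g0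
          · -- (2,3)
            have hCs : C s = Γ2 (s - ℓ1) := by
              simp only [hC]; rw [if_neg (not_le.2 hs1), if_pos hs2]
            have hbr2 : dist (Γ2 (s - ℓ1)) (β τB) = g0 - (s - ℓ1) := by
              rw [← hΓ2e, hΓ2iso (s - ℓ1) ⟨by linarith, by linarith⟩ g0 ⟨hg0nn, le_refl _⟩,
                abs_of_nonpos (by linarith), neg_sub]
            have hub : dist (C s) (C t) ≤ (g0 - (s - ℓ1)) + r := by
              rw [hCs, hCt]
              calc dist (Γ2 (s - ℓ1)) (β (τB + r))
                  ≤ dist (Γ2 (s - ℓ1)) (β τB) + dist (β τB) (β (τB + r)) := dist_triangle _ _ _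
                _ = (g0 - (s - ℓ1)) + r := by rw [hbr2, hβr]
            have hlb : r - (g0 - (s - ℓ1)) ≤ dist (C s) (C t) := by
              rw [hCs, hCt]
              have := dist_triangle (β τB) (Γ2 (s - ℓ1)) (β (τB + r))
              rw [hβr, dist_comm (β τB) (Γ2 (s - ℓ1)), hbr2] at this
              linarith
            have hgap : t - s = (g0 - (s - ℓ1)) + r := by rw [hr]; ring
            rw [hinv]
            constructor
            · linarith [dist_nonneg (x := C s) (y := C t)]
            · linarith [dist_nonneg (x := C s) (y := C t)]
          · -- (3,3)
            push_neg at hs2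
            set rs : ℝ := s - ℓ1 - g0 with hrs
            have hrspos : 0 < rs := by simp only [hrs]; linarith
            have hrsle : rs ≤ L2 - τB := by simp only [hrs]; simp only [hT] at hsT; linarith
            have hCs : C s = β (τB + rs) := by
              simp only [hC]; rw [if_neg (not_le.2 hs1), if_neg (not_le.2 hs2)]
            have hd : dist (C s) (C t) = t - s := by
              rw [hCs, hCt, hβiso (τB + rs) ⟨by linarith, by linarith⟩ (τB + r) hτrmem,
                show τB + rs - (τB + r) = -(t - s) by rw [hrs, hr]; ring, abs_neg,
                abs_of_nonneg (by linarith)]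
            rw [hd, hinv]
            constructor <;> linarith
  -- apply stability to the grand chain
  have hgab : IsGeodesicSegment γab (C 0) (C T) := by rw [hC0, hCT]; exact hab
  have hstab2 := hH2 0 T C hCq γab hgab
  have hdCT : dist (C 0) (C T) = D := by rw [hC0, hCT]
  -- conclude the covering
  intro s0 hs0
  have hCimne : (C '' Set.Icc 0 T).Nonempty := ⟨C 0, 0, ⟨le_refl _, hTnn⟩, rfl⟩
  have habim_ne : (γab '' Set.Icc 0 (dist (C 0) (C T))).Nonempty :=
    ⟨γab 0, 0, ⟨le_refl _, by rw [hdCT]; exact dist_nonneg⟩, rfl⟩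
  have hγta : dist (γca τt) a = ℓ1 := by
    calc dist (γca τt) a = dist (γca τt) (γca L1) := by rw [hca.2.1]
      _ = |τt - L1| := hca.2.2 τt hτt L1 ⟨hL1n, le_refl _⟩
      _ = ℓ1 := by rw [abs_of_nonpos (by linarith [hτt.2]), hℓ1]; ring
  have hCim_b : C '' Set.Icc 0 T ⊆ Metric.closedBall a T := by
    rintro z ⟨t, ht, rfl⟩
    simp only [Metric.mem_closedBall, hC]
    split_ifs with h1 h2
    · have hmem : L1 - t ∈ Set.Icc (0:ℝ) L1 :=
        ⟨by linarith [le_trans h1 hℓ1L1], by linarith [ht.1]⟩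
      calc dist (γca (L1 - t)) a = dist (γca (L1 - t)) (γca L1) := by rw [hca.2.1]
        _ = |L1 - t - L1| := hca.2.2 _ hmem L1 ⟨hL1n, le_refl _⟩
        _ = t := by rw [show L1 - t - L1 = -t by ring, abs_neg, abs_of_nonneg ht.1]
        _ ≤ T := ht.2
    · push_neg at h1
      have hmemb : t - ℓ1 ∈ Set.Icc (0:ℝ) g0 := ⟨by linarith, by linarith⟩
      have hb1 : dist (Γ2 (t - ℓ1)) (γca τt) = t - ℓ1 := by
        rw [← hΓ20, hΓ2iso (t - ℓ1) hmemb 0 ⟨le_refl _, hg0nn⟩, sub_zero,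
          abs_of_nonneg (by linarith)]
      calc dist (Γ2 (t - ℓ1)) a ≤ dist (Γ2 (t - ℓ1)) (γca τt) + dist (γca τt) a :=
            dist_triangle _ _ _
        _ = (t - ℓ1) + ℓ1 := by rw [hb1, hγta]
        _ = t := by ring
        _ ≤ T := ht.2
    · push_neg at h1 h2
      have htT2 : t ≤ T := ht.2
      have hrr : τB + (t - ℓ1 - g0) ∈ Set.Icc (0:ℝ) L2 :=
        ⟨by linarith, by simp only [hT] at htT2; linarith⟩
      have hb2 : dist (β (τB + (t - ℓ1 - g0))) (β τB) = t - ℓ1 - g0 := by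
        rw [hβiso _ hrr τB hτBmem, show τB + (t - ℓ1 - g0) - τB = t - ℓ1 - g0 by ring,
          abs_of_nonneg (by linarith)]
      calc dist (β (τB + (t - ℓ1 - g0))) a
          ≤ dist (β (τB + (t - ℓ1 - g0))) (β τB) + dist (β τB) (γca τt) + dist (γca τt) a :=
            dist_triangle4 _ _ _ _
        _ = (t - ℓ1 - g0) + g0 + ℓ1 := by rw [hb2, dist_comm (β τB) (γca τt), ← hg0, hγta]
        _ = t := by ring
        _ ≤ T := ht.2
  have hCbd : Bornology.IsBounded (C '' Set.Icc 0 T) :=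
    Metric.isBounded_closedBall.subset hCim_b
  have habbd : Bornology.IsBounded (γab '' Set.Icc 0 (dist (C 0) (C T))) := by
    apply (Metric.isBounded_closedBall (x := a) (r := D)).subset
    rintro z ⟨u, hu, rfl⟩
    have huD : u ∈ Set.Icc (0:ℝ) D := ⟨hu.1, by rw [hdCT] at hu; exact hu.2⟩
    simp only [Metric.mem_closedBall]
    calc dist (γab u) a = dist (γab u) (γab 0) := by rw [hab.1]
      _ = |u - 0| := hab.2.2 u huD 0 ⟨le_refl _, dist_nonneg⟩
      _ = u := by rw [sub_zero, abs_of_nonneg huD.1]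
      _ ≤ D := huD.2
  have hfin2 : Metric.hausdorffEDist (γab '' Set.Icc 0 (dist (C 0) (C T)))
      (C '' Set.Icc 0 T) ≠ ⊤ := by
    rw [Metric.hausdorffEDist_comm]
    exact Metric.hausdorffEdist_ne_top_of_nonempty_of_bounded hCimne habim_ne hCbd habbd
  have hmem0 : γab s0 ∈ γab '' Set.Icc 0 (dist (C 0) (C T)) :=
    ⟨s0, by rw [hdCT]; exact hs0, rfl⟩
  have hstep1 : infDist (γab s0) (C '' Set.Icc 0 T) ≤ H2 := by
    have h1 := Metric.infDist_le_hausdorffDist_of_mem hmem0 hfin2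
    rw [Metric.hausdorffDist_comm] at h1
    exact le_trans h1 hstab2
  have hnear : ∀ z ∈ C '' Set.Icc 0 T,
      infDist z (γbc '' Set.Icc 0 L2 ∪ γca '' Set.Icc 0 L1) ≤ Θ + 1 := by
    rintro z ⟨t, ht, rfl⟩
    simp only [hC]
    split_ifs with h1 h2
    · refine le_trans (infDist_le_dist_of_mem (Set.mem_union_right _
        ⟨L1 - t, ⟨by linarith [le_trans h1 hℓ1L1], by linarith [ht.1]⟩, rfl⟩)) ?_
      rw [dist_self]
      linarith
    · push_neg at h1
      have hmemb : t - ℓ1 ∈ Set.Icc (0:ℝ) g0 := ⟨by linarith, by linarith⟩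
      refine le_trans (infDist_le_dist_of_mem (Set.mem_union_right _ ⟨τt, hτt, rfl⟩)) ?_
      rw [← hΓ20, hΓ2iso (t - ℓ1) hmemb 0 ⟨le_refl _, hg0nn⟩, sub_zero,
        abs_of_nonneg (by linarith)]
      linarith
    · push_neg at h1 h2
      have htT2 : t ≤ T := ht.2
      have hrr0 : (0:ℝ) ≤ τB + (t - ℓ1 - g0) := by linarith
      have hrrL : τB + (t - ℓ1 - g0) ≤ L2 := by simp only [hT] at htT2; linarith
      refine le_trans (infDist_le_dist_of_mem (Set.mem_union_left _
        ⟨L2 - (τB + (t - ℓ1 - g0)), ⟨by linarith, by linarith⟩, rfl⟩)) ?_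
      rw [dist_self]
      linarith
  have hfinal : ∀ ε > (0:ℝ), infDist (γab s0) (γbc '' Set.Icc 0 L2 ∪ γca '' Set.Icc 0 L1)
      ≤ (H2 + (Θ + 1)) + ε := by
    intro ε hε
    have h2 : infDist (γab s0) (C '' Set.Icc 0 T) < H2 + ε := by linarith
    obtain ⟨z, hzC, hzd⟩ := (infDist_lt_iff hCimne).1 h2
    calc infDist (γab s0) (γbc '' Set.Icc 0 L2 ∪ γca '' Set.Icc 0 L1)
        ≤ infDist z (γbc '' Set.Icc 0 L2 ∪ γca '' Set.Icc 0 L1) + dist (γab s0) z :=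
          infDist_le_infDist_add_dist
      _ ≤ (Θ + 1) + (H2 + ε) := add_le_add (hnear z hzC) hzd.le
      _ = (H2 + (Θ + 1)) + ε := by ring
  have hdone := le_of_forall_pos_le_add hfinal
  calc infDist (γab s0) (γbc '' Set.Icc 0 L2 ∪ γca '' Set.Icc 0 L1) ≤ H2 + (Θ + 1) := hdone
    _ = H2 + H1 + 102 := by rw [hΘ]; ring

theorem geodesic_stability_implies_hyperbolic {X : Type*} [MetricSpace X]
    (hgeo : GeodesicSpace X)
    (hstab : ∀ lam S : ℝ, 1 ≤ lam → 0 < S → ∃ H : ℝ, 0 < H ∧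
      ∀ (a b : ℝ) (γ : ℝ → X), IsQuasiGeodesicOn lam S γ a b →
        ∀ g : ℝ → X, IsGeodesicSegment g (γ a) (γ b) →
          Metric.hausdorffDist (γ '' Set.Icc a b)
            (g '' Set.Icc 0 (dist (γ a) (γ b))) ≤ H) :
    ∃ δ : ℝ, 0 ≤ δ ∧ ThinTriangles X δ := by
  obtain ⟨H1, hH1pos, hH1⟩ := hstab 100 100 (by norm_num) (by norm_num)
  obtain ⟨H2, hH2pos, hH2⟩ := hstab 100 (100 * (H1 + 101) + 100) (by norm_num) (by linarith)
  refine ⟨H2 + H1 + 102, by linarith, ?_⟩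
  intro a b c γab γbc γca hab hbc hca
  refine ⟨?_, ?_, ?_⟩
  · exact cover hgeo hH1pos hH1 hH2 a b c γab γbc γca hab hbc hca
  · intro s hs
    have := cover hgeo hH1pos hH1 hH2 b c a γbc γca γab hbc hca hab s hs
    rwa [Set.union_comm] at this
  · intro s hs
    exact cover hgeo hH1pos hH1 hH2 c a b γca γab γbc hca hab hbc s hs
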